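/- Let Σ_{n≥0} κ_n q^n be the unique formal power series over ℝ satisfying q·f² − (q³ + 2q − 1)·f − 1 = 0. For every real q with 0 < q < R_{√2}, the series Σ_{n≥0} κ_n q^n converges and its sum equals (q³ + 2q − 1 + √((q⁴ + q³ + 4q² + q + 1)(q² − q + 1))) / (2q). -/

import Mathlib

/-- `R_{√2} = (1 + √2 − √(2√2 − 1))/2`. -/
noncomputable def Rsqrt2 : ℝ := (1 + Real.sqrt 2 - Real.sqrt (2 * Real.sqrt 2 - 1)) / 2

open Complex
open scoped ENNReal NNReal

namespace QA

noncomputable def u : ℝ := Real.sqrt 2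
noncomputable def vv : ℝ := Real.sqrt (2 * Real.sqrt 2 - 1)
noncomputable def g : ℝ := Real.sqrt (8 * Real.sqrt 2 - 11)
noncomputable def h : ℝ := Real.sqrt (8 * Real.sqrt 2 + 11)
noncomputable def k : ℝ := Real.sqrt 3

lemma s2_gt : (1.414 : ℝ) < Real.sqrt 2 := by
  have : (1.414 : ℝ) = Real.sqrt (1.414 ^ 2) := by
    rw [Real.sqrt_sq]; norm_num
  rw [this]
  exact Real.sqrt_lt_sqrt (by positivity) (by norm_num)
lemma s2_lt : Real.sqrt 2 < 1.415 := by
  have : (1.415 : ℝ) = Real.sqrt (1.415 ^ 2) := by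
    rw [Real.sqrt_sq]; norm_num
  rw [this]
  exact Real.sqrt_lt_sqrt (by norm_num) (by norm_num)
lemma u_sq : u ^ 2 = 2 := Real.sq_sqrt (by norm_num)
lemma u_gt : (1.414 : ℝ) < u := s2_gt
lemma u_lt : u < 1.415 := s2_lt
lemma u_pos : 0 < u := by nlinarith [u_gt]
lemma vv_sq : vv ^ 2 = 2 * u - 1 := Real.sq_sqrt (by nlinarith [s2_gt])
lemma vv_pos : 0 < vv := Real.sqrt_pos.mpr (by nlinarith [s2_gt])
lemma g_sq : g ^ 2 = 8 * u - 11 := Real.sq_sqrt (by nlinarith [s2_gt])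
lemma g_pos : 0 < g := Real.sqrt_pos.mpr (by nlinarith [s2_gt])
lemma h_sq : h ^ 2 = 8 * u + 11 := Real.sq_sqrt (by nlinarith [s2_gt])
lemma h_pos : 0 < h := Real.sqrt_pos.mpr (by nlinarith [s2_gt])
lemma k_sq : k ^ 2 = 3 := Real.sq_sqrt (by norm_num)
lemma k_pos : 0 < k := Real.sqrt_pos.mpr (by norm_num)
lemma g_lt_one : g < 1 := by nlinarith [g_sq, g_pos, u_lt]

lemma R_eq : Rsqrt2 = (1 + u - vv) / 2 := rfl
lemma R_pos : 0 < Rsqrt2 := by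
  rw [R_eq]
  nlinarith [vv_sq, vv_pos, u_gt, u_lt]
lemma R_lt_one : Rsqrt2 < 1 := by
  rw [R_eq]
  nlinarith [vv_sq, vv_pos, u_gt, u_lt]

lemma hvg : vv * (1 + u) = g * (3 + 2 * u) := by
  have hsq : (vv * (1 + u)) ^ 2 = (g * (3 + 2 * u)) ^ 2 := by
    linear_combination (-(9:ℝ) - 12*u - 4*u^2) * g_sq + (vv^2 - 32*u - 48) * u_sq
      + (3 + 2*u) * vv_sq
  have h1 : 0 ≤ vv * (1 + u) := by nlinarith [vv_pos, u_pos]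
  have h2 : 0 ≤ g * (3 + 2 * u) := by nlinarith [g_pos, u_pos]
  nlinarith [hsq, h1, h2]

/-! Complex constants -/

noncomputable def z0 : ℂ := ((g : ℂ) - 1) * (1 + (h : ℂ) * I) / 4
noncomputable def z0b : ℂ := ((g : ℂ) - 1) * (1 - (h : ℂ) * I) / 4
noncomputable def tt : ℂ := (-1 + (g : ℂ) * (h : ℂ) * I) / 2
noncomputable def ttb : ℂ := (-1 - (g : ℂ) * (h : ℂ) * I) / 2
noncomputable def zeta : ℂ := (1 + (k : ℂ) * I) / 2
noncomputable def zetab : ℂ := (1 - (k : ℂ) * I) / 2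

lemma ugtC : ((u:ℝ):ℂ) = (Real.sqrt 2 : ℝ) := rfl
lemma hgC : ((g : ℝ) : ℂ) ^ 2 = 8 * ((u:ℝ):ℂ) - 11 := by
  rw [← Complex.ofReal_pow, g_sq]; push_cast; ring
lemma hhC : ((h : ℝ) : ℂ) ^ 2 = 8 * ((u:ℝ):ℂ) + 11 := by
  rw [← Complex.ofReal_pow, h_sq]; push_cast; ring
lemma huC : ((u : ℝ) : ℂ) ^ 2 = 2 := by
  rw [← Complex.ofReal_pow, u_sq]; norm_num
lemma hkC : ((k : ℝ) : ℂ) ^ 2 = 3 := by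
  rw [← Complex.ofReal_pow, k_sq]; norm_num

lemma hquad : z0 * (tt - z0) = 1 := by
  rw [z0, tt]
  linear_combination (-(h:ℂ)^2/16 + (g:ℂ)^2*(h:ℂ)^2/16) * Complex.I_sq
    + (-(1:ℂ)/16 - (h:ℂ)^2/16) * hgC + ((3:ℂ)/4 - ((u:ℝ):ℂ)/2) * hhC + (-4 : ℂ) * huC
lemma hquadb : z0b * (ttb - z0b) = 1 := by
  rw [z0b, ttb]
  linear_combination (-(h:ℂ)^2/16 + (g:ℂ)^2*(h:ℂ)^2/16) * Complex.I_sq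
    + (-(1:ℂ)/16 - (h:ℂ)^2/16) * hgC + ((3:ℂ)/4 - ((u:ℝ):ℂ)/2) * hhC + (-4 : ℂ) * huC
lemma httb : tt * ttb = 2 := by
  rw [tt, ttb]
  linear_combination (-(g:ℂ)^2*(h:ℂ)^2/4) * Complex.I_sq + ((h:ℂ)^2/4) * hgC
    + (-(11:ℂ)/4 + 2*((u:ℝ):ℂ)) * hhC + (16:ℂ) * huC

lemma pairA (z : ℂ) : (1 - zeta * z) * (1 - zetab * z) = z ^ 2 - z + 1 := by
  rw [zeta, zetab]
  linear_combination (-(k:ℂ)^2*z^2/4) * Complex.I_sq + (z^2/4) * hkC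

lemma pairB (z : ℂ) : (1 - (tt - z0) * z) * (1 - z0 * z) = z ^ 2 - tt * z + 1 := by
  linear_combination z ^ 2 * hquad
lemma pairC (z : ℂ) : (1 - (ttb - z0b) * z) * (1 - z0b * z) = z ^ 2 - ttb * z + 1 := by
  linear_combination z ^ 2 * hquadb
lemma pairD (z : ℂ) : (z ^ 2 - tt * z + 1) * (z ^ 2 - ttb * z + 1)
    = z ^ 4 + z ^ 3 + 4 * z ^ 2 + z + 1 := by
  have hs : tt + ttb = -1 := by rw [tt, ttb]; ring
  linear_combination z ^ 2 * httb + (- z^3 - z) * hs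

lemma prod_eq (z : ℂ) :
    ((1 - zeta * z) * (1 - zetab * z)) * ((1 - (tt - z0) * z) * (1 - z0 * z))
      * ((1 - (ttb - z0b) * z) * (1 - z0b * z))
    = (z ^ 3 + 2 * z - 1) ^ 2 + 4 * z := by
  rw [pairA, pairB, pairC]
  linear_combination (z ^ 2 - z + 1) * pairD z

lemma normSq_z0 : Complex.normSq z0 = Rsqrt2 ^ 2 := by
  have e1 : Complex.normSq z0 = (g - 1) ^ 2 * (1 + h ^ 2) / 16 := by
    simp [z0, Complex.normSq_apply, Complex.div_re, Complex.div_im, Complex.normSq_apply]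
    ring
  have e2 : (g - 1) ^ 2 * (1 + h ^ 2) / 16 = (1 + 2 * u - 3 * g - 2 * u * g) / 2 := by
    linear_combination ((1:ℝ)/16 + h^2/16) * g_sq + (-(5:ℝ)/8 + u/2 - g/8) * h_sq + 4 * u_sq
  have e3 : Rsqrt2 ^ 2 = (1 + 2 * u - (1 + u) * vv) / 2 := by
    rw [R_eq]
    linear_combination (1/4 : ℝ) * u_sq + (1/4 : ℝ) * vv_sq
  rw [e1, e2, e3]
  have := hvg
  linarith [hvg]

lemma abs_z0 : ‖z0‖ = Rsqrt2 := by
  have : ‖z0‖ ^ 2 = Rsqrt2 ^ 2 := by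
    rw [Complex.sq_norm, normSq_z0]
  nlinarith [this, norm_nonneg z0, R_pos]

lemma z0_ne : z0 ≠ 0 := by
  intro hz
  have := hquad
  rw [hz] at this
  simp at this

lemma abs_zeta : ‖zeta‖ = 1 := by
  have : ‖zeta‖ ^ 2 = 1 := by
    rw [Complex.sq_norm]
    simp [zeta, Complex.normSq_apply, Complex.div_re, Complex.div_im, Complex.normSq_apply]
    nlinarith [k_sq]
  nlinarith [this, norm_nonneg zeta]

lemma conj_z0 : (starRingEnd ℂ) z0 = z0b := by
  rw [z0, z0b]
  simp only [map_div₀, map_mul, map_sub, map_add, map_one, map_ofNat, Complex.conj_ofReal, Complex.conj_I]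
  ring
lemma conj_tt : (starRingEnd ℂ) tt = ttb := by
  simp [tt, ttb, map_div₀, map_ofNat]
  ring
lemma conj_zeta : (starRingEnd ℂ) zeta = zetab := by
  simp [zeta, zetab, map_div₀, map_ofNat]
  ring



/-! ### The holomorphic square root `S` and the function `G` -/

noncomputable def csq (w : ℂ) : ℂ := Complex.exp (Complex.log w / 2)

lemma csq_ne (w : ℂ) : csq w ≠ 0 := Complex.exp_ne_zero _

lemma csq_sq {w : ℂ} (hw : w ≠ 0) : csq w ^ 2 = w := by
  rw [csq, sq, ← Complex.exp_add]
  rw [show Complex.log w / 2 + Complex.log w / 2 = Complex.log w by ring]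
  exact Complex.exp_log hw

lemma csq_one : csq 1 = 1 := by
  rw [csq, Complex.log_one]
  simp

lemma mem_slit {a z : ℂ} (h : ‖a‖ * ‖z‖ < 1) :
    (1 - a * z) ∈ Complex.slitPlane := by
  rw [Complex.mem_slitPlane_iff]
  left
  have h2 : (a * z).re ≤ ‖a * z‖ := Complex.re_le_norm _
  rw [norm_mul] at h2
  have : (1 - a * z).re = 1 - (a * z).re := by simp
  rw [this]
  linarith

lemma csq_conj {w : ℂ} (hw : w ∈ Complex.slitPlane) :
    csq ((starRingEnd ℂ) w) = (starRingEnd ℂ) (csq w) := by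
  rw [csq, csq, Complex.log_conj w (Complex.slitPlane_arg_ne_pi hw)]
  rw [show (starRingEnd ℂ) (Complex.log w) / 2 = (starRingEnd ℂ) (Complex.log w / 2) by
    rw [map_div₀, map_ofNat]]
  exact Complex.exp_conj _

noncomputable def S (z : ℂ) : ℂ :=
  (csq (1 - zeta * z) * csq (1 - zetab * z))
    * (csq (1 - (tt - z0) * z) * csq (1 - (ttb - z0b) * z))
    * (csq (1 - z0 * z) * csq (1 - z0b * z))

noncomputable def G (z : ℂ) : ℂ := 2 / (S z - (z ^ 3 + 2 * z - 1))

lemma abs_z0b : ‖z0b‖ = Rsqrt2 := by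
  rw [← conj_z0, Complex.norm_conj]; exact abs_z0
lemma abs_zetab : ‖zetab‖ = 1 := by
  rw [← conj_zeta, Complex.norm_conj]; exact abs_zeta
lemma abs_tz0 : ‖tt - z0‖ = Rsqrt2⁻¹ := by
  have h1 : tt - z0 = z0⁻¹ := (inv_eq_of_mul_eq_one_right hquad).symm
  rw [h1, norm_inv, abs_z0]
lemma abs_tz0b : ‖ttb - z0b‖ = Rsqrt2⁻¹ := by
  have h1 : ttb - z0b = (starRingEnd ℂ) (tt - z0) := by
    rw [map_sub, conj_tt, conj_z0]
  rw [h1, Complex.norm_conj]; exact abs_tz0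

section ball
variable {z : ℂ} (hz : ‖z‖ < Rsqrt2)
include hz

lemma slit1 : (1 - zeta * z) ∈ Complex.slitPlane := by
  apply mem_slit; rw [abs_zeta]; nlinarith [R_lt_one, norm_nonneg z]
lemma slit2 : (1 - zetab * z) ∈ Complex.slitPlane := by
  apply mem_slit; rw [abs_zetab]; nlinarith [R_lt_one, norm_nonneg z]
lemma slit3 : (1 - (tt - z0) * z) ∈ Complex.slitPlane := by
  apply mem_slit; rw [abs_tz0]
  rw [inv_mul_lt_iff₀ R_pos]
  simpa using hz
lemma slit4 : (1 - (ttb - z0b) * z) ∈ Complex.slitPlane := by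
  apply mem_slit; rw [abs_tz0b]
  rw [inv_mul_lt_iff₀ R_pos]
  simpa using hz
lemma slit5 : (1 - z0 * z) ∈ Complex.slitPlane := by
  apply mem_slit; rw [abs_z0]; nlinarith [R_lt_one, R_pos, norm_nonneg z]
lemma slit6 : (1 - z0b * z) ∈ Complex.slitPlane := by
  apply mem_slit; rw [abs_z0b]; nlinarith [R_lt_one, R_pos, norm_nonneg z]

lemma S_sq : S z ^ 2 = (z ^ 3 + 2 * z - 1) ^ 2 + 4 * z := by
  have e : S z ^ 2 = (csq (1 - zeta * z) ^ 2) * (csq (1 - zetab * z) ^ 2)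
      * ((csq (1 - (tt - z0) * z) ^ 2) * (csq (1 - (ttb - z0b) * z) ^ 2))
      * ((csq (1 - z0 * z) ^ 2) * (csq (1 - z0b * z) ^ 2)) := by
    rw [S]; ring
  rw [e, csq_sq (Complex.slitPlane_ne_zero (slit1 hz)),
    csq_sq (Complex.slitPlane_ne_zero (slit2 hz)),
    csq_sq (Complex.slitPlane_ne_zero (slit3 hz)),
    csq_sq (Complex.slitPlane_ne_zero (slit4 hz)),
    csq_sq (Complex.slitPlane_ne_zero (slit5 hz)),
    csq_sq (Complex.slitPlane_ne_zero (slit6 hz))]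
  rw [← prod_eq z]
  ring

lemma S_diffAt : DifferentiableAt ℂ S z := by
  have hd : ∀ a : ℂ, (1 - a * z) ∈ Complex.slitPlane →
      DifferentiableAt ℂ (fun w => csq (1 - a * w)) z := by
    intro a ha
    apply DifferentiableAt.cexp
    apply DifferentiableAt.div_const
    apply DifferentiableAt.clog
    · exact (differentiableAt_const _).sub (differentiableAt_id.const_mul a)
    · simpa using ha
  exact ((((hd _ (slit1 hz)).mul (hd _ (slit2 hz))).mul
    ((hd _ (slit3 hz)).mul (hd _ (slit4 hz)))).mul
    ((hd _ (slit5 hz)).mul (hd _ (slit6 hz))))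

omit hz in
lemma S_zero : S 0 = 1 := by
  rw [S]
  simp [csq_one]

lemma denom_ne : S z - (z ^ 3 + 2 * z - 1) ≠ 0 := by
  intro h0
  have hb : S z = z ^ 3 + 2 * z - 1 := by linear_combination h0
  have hz0 : z = 0 := by
    have := S_sq hz
    rw [hb] at this
    linear_combination (-1/4 : ℂ) * this
  rw [hz0] at hb
  rw [S_zero] at hb
  norm_num at hb

lemma G_diffAt : DifferentiableAt ℂ G z := by
  apply DifferentiableAt.div
  · exact differentiableAt_const _
  · exact (S_diffAt hz).sub (by fun_prop)
  · exact denom_ne hz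

end ball

/-! ### Values at real points -/

lemma abs_real_lt {q : ℝ} (hq0 : 0 < q) (hqR : q < Rsqrt2) :
    ‖(q : ℂ)‖ < Rsqrt2 := by
  rw [Complex.norm_of_nonneg hq0.le]; exact hqR

lemma S_real_pos {q : ℝ} (hq0 : 0 < q) (hqR : q < Rsqrt2) :
    ∃ σ : ℝ, 0 < σ ∧ S (q : ℂ) = (σ : ℂ) := by
  have hq := abs_real_lt hq0 hqR
  have h1 : (1 - zetab * (q:ℂ)) = (starRingEnd ℂ) (1 - zeta * (q:ℂ)) := by
    rw [map_sub, map_one, map_mul, conj_zeta, Complex.conj_ofReal]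
  have h2 : (1 - (ttb - z0b) * (q:ℂ)) = (starRingEnd ℂ) (1 - (tt - z0) * (q:ℂ)) := by
    rw [map_sub, map_one, map_mul, map_sub, conj_tt, conj_z0, Complex.conj_ofReal]
  have h3 : (1 - z0b * (q:ℂ)) = (starRingEnd ℂ) (1 - z0 * (q:ℂ)) := by
    rw [map_sub, map_one, map_mul, conj_z0, Complex.conj_ofReal]
  have e : S (q:ℂ) = ((Complex.normSq (csq (1 - zeta * (q:ℂ)))
      * Complex.normSq (csq (1 - (tt - z0) * (q:ℂ)))
      * Complex.normSq (csq (1 - z0 * (q:ℂ))) : ℝ) : ℂ) := by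
    rw [S, h1, h2, h3, csq_conj (slit1 hq), csq_conj (slit3 hq), csq_conj (slit5 hq),
      Complex.mul_conj, Complex.mul_conj, Complex.mul_conj]
    push_cast
    ring
  refine ⟨_, ?_, e⟩
  have n1 : 0 < Complex.normSq (csq (1 - zeta * (q:ℂ))) :=
    Complex.normSq_pos.mpr (csq_ne _)
  have n2 : 0 < Complex.normSq (csq (1 - (tt - z0) * (q:ℂ))) :=
    Complex.normSq_pos.mpr (csq_ne _)
  have n3 : 0 < Complex.normSq (csq (1 - z0 * (q:ℂ))) :=
    Complex.normSq_pos.mpr (csq_ne _)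
  positivity

lemma G_real {q : ℝ} (hq0 : 0 < q) (hqR : q < Rsqrt2) :
    G (q : ℂ) = (((q ^ 3 + 2 * q - 1 +
        Real.sqrt ((q ^ 4 + q ^ 3 + 4 * q ^ 2 + q + 1) * (q ^ 2 - q + 1))) / (2 * q) : ℝ) : ℂ) := by
  have hq := abs_real_lt hq0 hqR
  obtain ⟨σ, hσ0, hσ⟩ := S_real_pos hq0 hqR
  have hσsq : σ ^ 2 = (q ^ 3 + 2 * q - 1) ^ 2 + 4 * q := by
    have := S_sq hq
    rw [hσ] at this
    have h2 : ((σ ^ 2 : ℝ) : ℂ) = (((q ^ 3 + 2 * q - 1) ^ 2 + 4 * q : ℝ) : ℂ) := by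
      push_cast
      convert this using 2 <;> push_cast <;> ring
    exact_mod_cast h2
  have hprod : (q ^ 4 + q ^ 3 + 4 * q ^ 2 + q + 1) * (q ^ 2 - q + 1)
      = (q ^ 3 + 2 * q - 1) ^ 2 + 4 * q := by ring
  have hsqrt : Real.sqrt ((q ^ 4 + q ^ 3 + 4 * q ^ 2 + q + 1) * (q ^ 2 - q + 1)) = σ := by
    rw [hprod, ← hσsq, Real.sqrt_sq hσ0.le]
  rw [hsqrt]
  have hden : σ - (q ^ 3 + 2 * q - 1) > 0 := by nlinarith [hσ0, hσsq, hq0]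
  have hGq : G (q:ℂ) = ((2 / (σ - (q ^ 3 + 2 * q - 1)) : ℝ) : ℂ) := by
    rw [G, hσ]
    push_cast
    ring_nf
  rw [hGq]
  congr 1
  rw [div_eq_div_iff (by linarith) (by linarith)]
  linear_combination (-1 : ℝ) * hσsq

lemma G_eqn {z : ℂ} (hz : ‖z‖ < Rsqrt2) :
    z * G z ^ 2 - (z ^ 3 + 2 * z - 1) * G z - 1 = 0 := by
  have hd := denom_ne hz
  have hs := S_sq hz
  have hGD : G z * (S z - (z ^ 3 + 2 * z - 1)) = 2 := by
    rw [G]; exact div_mul_cancel₀ _ hd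
  refine mul_left_cancel₀ (pow_ne_zero 2 hd) ?_
  linear_combination (z * (G z * (S z - (z ^ 3 + 2 * z - 1)))
    - (z ^ 3 + 2 * z - 1) * (S z - (z ^ 3 + 2 * z - 1)) + 2 * z) * hGD - hs

/-! ### Series machinery -/

lemma abs_lt_of_mem_eball {y : ℂ} {ρ : ℝ} (hρ : 0 ≤ ρ)
    (hy : y ∈ Metric.eball (0 : ℂ) ρ.toNNReal) : ‖y‖ < ρ := by
  rw [Metric.mem_eball, edist_zero_right] at hy
  have h1 : ‖y‖₊ < ρ.toNNReal := by exact_mod_cast hy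
  have h2 : (‖y‖₊ : ℝ) < (ρ.toNNReal : ℝ) := h1
  rw [Real.coe_toNNReal _ hρ, coe_nnnorm] at h2
  exact h2

lemma mem_eball_of_abs_lt {y : ℂ} {ρ : ℝ} (hy : ‖y‖ < ρ) :
    y ∈ Metric.eball (0 : ℂ) ρ.toNNReal := by
  rw [Metric.mem_eball, edist_zero_right]
  have h1 : ‖y‖₊ < ρ.toNNReal := by
    rw [← NNReal.coe_lt_coe]
    rw [Real.coe_toNNReal _ (le_of_lt (lt_of_le_of_lt (norm_nonneg y) hy))]
    exact hy
  exact_mod_cast h1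

lemma coeffs_zero {c : ℕ → ℂ} {ρ : ℝ} (hρ : 0 < ρ)
    (hs : ∀ z : ℂ, ‖z‖ < ρ → HasSum (fun n => c n * z ^ n) 0) :
    ∀ n, c n = 0 := by
  have h2 : (0 : ℝ) < ρ / 2 := by linarith
  have habs2 : ‖((ρ / 2 : ℝ) : ℂ)‖ < ρ := by
    rw [Complex.norm_of_nonneg h2.le]; linarith
  have hsum2 : Summable fun n => ‖c n‖ * (ρ / 2) ^ n := by
    have h3 := summable_norm_iff.mpr (hs _ habs2).summable
    refine h3.congr fun n => ?_
    rw [norm_mul, norm_pow, Complex.norm_real, Real.norm_of_nonneg h2.le]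
  set p0 := FormalMultilinearSeries.ofScalars ℂ c with hp0
  have hrad : ((ρ / 2).toNNReal : ℝ≥0∞) ≤ p0.radius := by
    apply p0.le_radius_of_summable
    refine hsum2.congr fun n => ?_
    rw [FormalMultilinearSeries.ofScalars_norm]
    congr 1
    rw [Real.coe_toNNReal _ h2.le]
  have hball : HasFPowerSeriesOnBall (0 : ℂ → ℂ) p0 0 (ρ / 2).toNNReal := by
    refine ⟨hrad, by simpa using h2, fun {y} hy => ?_⟩
    have hy' : ‖y‖ < ρ := lt_trans (abs_lt_of_mem_eball h2.le hy) (by linarith)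
    have := hs y hy'
    have hfun : (fun n => p0 n fun _ => y) = fun n => c n * y ^ n := by
      funext n
      rw [hp0, FormalMultilinearSeries.ofScalars_apply_eq, smul_eq_mul]
    rw [hfun]
    simpa using this
  have hz := hball.hasFPowerSeriesAt.eq_zero
  intro n
  have := congrFun hz n
  exact (FormalMultilinearSeries.ofScalars_eq_zero ℂ n).mp this

lemma hasSum_coeff_mul {F1 F2 : PowerSeries ℂ} {z A B : ℂ}
    (h1 : HasSum (fun n => PowerSeries.coeff n F1 * z ^ n) A)
    (h2 : HasSum (fun n => PowerSeries.coeff n F2 * z ^ n) B) :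
    HasSum (fun n => PowerSeries.coeff n (F1 * F2) * z ^ n) (A * B) := by
  set a : ℕ → ℂ := fun n => PowerSeries.coeff n F1 * z ^ n with ha
  set b : ℕ → ℂ := fun n => PowerSeries.coeff n F2 * z ^ n with hb
  have hna : Summable fun n => ‖a n‖ := summable_norm_iff.mpr h1.summable
  have hnb : Summable fun n => ‖b n‖ := summable_norm_iff.mpr h2.summable
  have hsab : Summable fun n => ∑ kl ∈ Finset.HasAntidiagonal.antidiagonal n, a kl.1 * b kl.2 :=
    (summable_norm_sum_mul_antidiagonal_of_summable_norm hna hnb).of_norm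
  have htsum := tsum_mul_tsum_eq_tsum_sum_antidiagonal_of_summable_norm hna hnb
  rw [h1.tsum_eq, h2.tsum_eq] at htsum
  have hfin : HasSum (fun n => ∑ kl ∈ Finset.HasAntidiagonal.antidiagonal n, a kl.1 * b kl.2) (A * B) := by
    rw [htsum]
    exact hsab.hasSum
  have hfun : (fun n => PowerSeries.coeff n (F1 * F2) * z ^ n)
      = fun n => ∑ kl ∈ Finset.HasAntidiagonal.antidiagonal n, a kl.1 * b kl.2 := by
    funext n
    rw [PowerSeries.coeff_mul, Finset.sum_mul]
    refine Finset.sum_congr rfl fun kl hkl => ?_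
    have hn := Finset.HasAntidiagonal.mem_antidiagonal.mp hkl
    simp only [ha, hb]
    rw [← hn, pow_add]
    ring
  rw [hfun]
  exact hfin

lemma hasSum_shift (k : ℕ) {e : ℕ → ℂ} {z A : ℂ}
    (h : HasSum (fun n => e n * z ^ n) A) :
    HasSum (fun n => (if k ≤ n then e (n - k) else 0) * z ^ n) (z ^ k * A) := by
  have h1 : HasSum (fun n => (if k ≤ n + k then e (n + k - k) else 0) * z ^ (n + k))
      (z ^ k * A) := by
    have hfe : (fun n => (if k ≤ n + k then e (n + k - k) else 0) * z ^ (n + k))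
        = fun n => z ^ k * (e n * z ^ n) := by
      funext n
      rw [if_pos (Nat.le_add_left k n), Nat.add_sub_cancel, pow_add]
      ring
    rw [hfe]
    exact h.mul_left _
  have h3 := (hasSum_nat_add_iff (f := fun n => (if k ≤ n then e (n - k) else 0) * z ^ n) k).mp h1
  have h4 : ∑ i ∈ Finset.range k, (if k ≤ i then e (i - k) else 0) * z ^ i = 0 := by
    apply Finset.sum_eq_zero
    intro i hi
    have hik : i < k := Finset.mem_range.mp hi
    rw [if_neg (by omega), zero_mul]
  rw [h4, add_zero] at h3
  exact h3

end QA

theorem qSqrtTwoPlusOne_sum_formula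
    (f : PowerSeries ℝ)
    (hf : PowerSeries.X * f ^ 2 - (PowerSeries.X ^ 3 + 2 * PowerSeries.X - 1) * f - 1 = 0) :
    ∀ q : ℝ, 0 < q → q < Rsqrt2 →
      HasSum (fun n : ℕ => PowerSeries.coeff n f * q ^ n)
        ((q ^ 3 + 2 * q - 1 +
            Real.sqrt ((q ^ 4 + q ^ 3 + 4 * q ^ 2 + q + 1) * (q ^ 2 - q + 1))) / (2 * q)) := by
  intro q hq0 hqR
  classical
  set r : ℝ := (q + Rsqrt2) / 2 with hrdef
  have hq_r : q < r := by rw [hrdef]; linarith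
  have hrR : r < Rsqrt2 := by rw [hrdef]; linarith
  have hr0 : 0 < r := by rw [hrdef]; linarith
  have hdiff : DifferentiableOn ℂ QA.G (Metric.closedBall 0 (r.toNNReal : ℝ)) := by
    intro z hzm
    refine (QA.G_diffAt ?_).differentiableWithinAt
    have h1 : dist z 0 ≤ (r.toNNReal : ℝ) := Metric.mem_closedBall.mp hzm
    rw [Complex.dist_eq, sub_zero] at h1
    rw [Real.coe_toNNReal _ hr0.le] at h1
    exact lt_of_le_of_lt h1 hrR
  have hrpos' : 0 < r.toNNReal := Real.toNNReal_pos.mpr hr0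
  have hball := hdiff.hasFPowerSeriesOnBall hrpos'
  set p := cauchyPowerSeries QA.G 0 r.toNNReal with hpdef
  have hsum : ∀ y : ℂ, ‖y‖ < r → HasSum (fun n => p.coeff n * y ^ n) (QA.G y) := by
    intro y hy
    have hmem := QA.mem_eball_of_abs_lt hy
    have h1 := hball.hasSum hmem
    rw [zero_add] at h1
    have hfun : (fun n => p n fun _ => y) = fun n => p.coeff n * y ^ n := by
      funext n
      rw [FormalMultilinearSeries.apply_eq_pow_smul_coeff, smul_eq_mul, mul_comm]
    rwa [hfun] at h1
  set F : PowerSeries ℂ := PowerSeries.mk fun n => p.coeff n with hFdef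
  have hFs : ∀ y : ℂ, ‖y‖ < r →
      HasSum (fun n => PowerSeries.coeff n F * y ^ n) (QA.G y) := by
    intro y hy
    have h1 := hsum y hy
    have hfun : (fun n => PowerSeries.coeff n F * y ^ n) = fun n => p.coeff n * y ^ n := by
      funext n
      rw [hFdef, PowerSeries.coeff_mk]
    rwa [hfun]
  set E : PowerSeries ℂ := PowerSeries.X ^ 1 * (F * F) - PowerSeries.X ^ 3 * F
      - PowerSeries.C 2 * (PowerSeries.X ^ 1 * F) + F - 1 with hEdef
  have hE0 : ∀ n, PowerSeries.coeff n E = 0 := by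
    apply QA.coeffs_zero hr0
    intro z hz
    have hzR : ‖z‖ < Rsqrt2 := lt_trans hz hrR
    have hF1 := hFs z hz
    have hF2 := QA.hasSum_coeff_mul hF1 hF1
    have hXF2 := QA.hasSum_shift 1 hF2
    have hX3F := QA.hasSum_shift 3 hF1
    have hXF := QA.hasSum_shift 1 hF1
    have hone : HasSum (fun n => PowerSeries.coeff n (1 : PowerSeries ℂ) * z ^ n) 1 := by
      have h1 : ∀ n : ℕ, n ≠ 0 → PowerSeries.coeff n (1 : PowerSeries ℂ) * z ^ n = 0 := by
        intro n hn
        rw [PowerSeries.coeff_one, if_neg hn, zero_mul]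
      have h2 := hasSum_single (f := fun n => PowerSeries.coeff n (1 : PowerSeries ℂ) * z ^ n)
        0 (fun b hb => h1 b hb)
      simpa using h2
    have hcomb := ((((hXF2.sub hX3F).sub (hXF.mul_left 2)).add hF1).sub hone)
    convert hcomb using 1
    · rfl
    · funext n
      rw [hEdef]
      simp only [map_sub, map_add, PowerSeries.coeff_C_mul, PowerSeries.coeff_X_pow_mul']
      ring
    · have hg := QA.G_eqn hzR
      linear_combination - hg
  have hEzero : E = 0 := PowerSeries.ext fun n => by rw [hE0 n, map_zero]
  have h2C : (PowerSeries.C 2 : PowerSeries ℂ) = (2 : PowerSeries ℂ) := by rw [map_ofNat]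
  have hFeq : PowerSeries.X * F ^ 2 - (PowerSeries.X ^ 3 + 2 * PowerSeries.X - 1) * F - 1 = 0 := by
    rw [hEdef] at hEzero
    linear_combination hEzero + (PowerSeries.X * F) * h2C
  set Fc : PowerSeries ℂ := PowerSeries.map (algebraMap ℝ ℂ) f with hFcdef
  have hfc : PowerSeries.X * Fc ^ 2 - (PowerSeries.X ^ 3 + 2 * PowerSeries.X - 1) * Fc - 1 = 0 := by
    have h1 := congrArg (PowerSeries.map (algebraMap ℝ ℂ)) hf
    simpa [map_sub, map_mul, map_pow, map_add, map_one, map_ofNat, PowerSeries.map_X] using h1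
  have hkey : (F - Fc) * (PowerSeries.X * (F + Fc)
      - (PowerSeries.X ^ 3 + 2 * PowerSeries.X - 1)) = 0 := by
    linear_combination hFeq - hfc
  have hfac : PowerSeries.X * (F + Fc) - (PowerSeries.X ^ 3 + 2 * PowerSeries.X - 1) ≠ 0 := by
    intro h0
    have h1 := congrArg (PowerSeries.constantCoeff (R := ℂ)) h0
    simp [map_sub, map_mul, map_add, map_one, map_ofNat, PowerSeries.constantCoeff_X] at h1
  have hFFc : F = Fc := by
    rcases mul_eq_zero.mp hkey with h | h
    · exact sub_eq_zero.mp h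
    · exact absurd h hfac
  have hdn : ∀ n : ℕ, p.coeff n = ((PowerSeries.coeff n f : ℝ) : ℂ) := by
    intro n
    have h1 := congrArg (PowerSeries.coeff n) hFFc
    rw [hFdef, hFcdef, PowerSeries.coeff_mk, PowerSeries.coeff_map] at h1
    simpa using h1
  have hqlt : ‖(q : ℂ)‖ < r := by
    rw [Complex.norm_of_nonneg hq0.le]; exact hq_r
  have hfin := hsum (q : ℂ) hqlt
  rw [QA.G_real hq0 hqR] at hfin
  have hfun2 : (fun n => p.coeff n * (q : ℂ) ^ n)
      = fun n => ((PowerSeries.coeff n f * q ^ n : ℝ) : ℂ) := by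
    funext n
    rw [hdn n]
    push_cast
    ring
  rw [hfun2] at hfin
  exact Complex.hasSum_ofReal.mp hfin
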